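/- arXiv:quant-ph/0309104 — 2 statements merged into one kernel-verified Lean document; each statement's English description precedes it below -/
import Mathlib

section
/- Let n be odd, N = 2^n, and v ∈ SU(N). Then vᵀ S v = S if and only if the matrix w = F₀ᵀ v F₀ satisfies wᵀ Σ w = Σ; that is, conjugation by the standard finagler identifies the symmetry group {v ∈ SU(N) : vᵀSv = S} of the concurrence form with the standard symplectic group Sp(N/2) = {w ∈ SU(N) : wᵀΣw = Σ}. -/
open Matrix Complex

noncomputable section

/-- Number of ones in the binary expansion of `j`. -/
def popCnt (j : ℕ) : ℕ := (Nat.digits 2 j).sum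

/-- The `N × N` matrix `S = (-iσ^y) ⊗ ⋯ ⊗ (-iσ^y)` (`n` factors), `N = 2^n`;
equivalently `S |j⟩ = (-1)^{#j} |N-1-j⟩`. -/
def Smat (n : ℕ) : Matrix (Fin (2 ^ n)) (Fin (2 ^ n)) ℂ :=
  fun k j => if (k : ℕ) + (j : ℕ) = 2 ^ n - 1 then (-1 : ℂ) ^ popCnt (j : ℕ) else 0

/-- The standard entangler `E₀` (for `n` even):
`E₀ = (1/√2) Σ_{j<N/2} ( |j⟩⟨2j| + i|j⟩⟨2j+1| + (-1)^{#j}(|N-j-1⟩⟨2j| - i|N-j-1⟩⟨2j+1|) )`. -/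
def E0 (n : ℕ) : Matrix (Fin (2 ^ n)) (Fin (2 ^ n)) ℂ :=
  fun r c =>
    (Real.sqrt 2 : ℂ)⁻¹ *
      (if (r : ℕ) < 2 ^ n / 2 then
        (if (c : ℕ) = 2 * (r : ℕ) then 1
         else if (c : ℕ) = 2 * (r : ℕ) + 1 then Complex.I else 0)
      else
        (if (c : ℕ) = 2 * (2 ^ n - 1 - (r : ℕ)) then
            (-1 : ℂ) ^ popCnt (2 ^ n - 1 - (r : ℕ))
         else if (c : ℕ) = 2 * (2 ^ n - 1 - (r : ℕ)) + 1 then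
            -Complex.I * (-1 : ℂ) ^ popCnt (2 ^ n - 1 - (r : ℕ))
         else 0))

/-- `Σ = Σ_{j<N/2} ( |j⟩⟨N/2+j| - |N/2+j⟩⟨j| )`. -/
def SigmaMat (n : ℕ) : Matrix (Fin (2 ^ n)) (Fin (2 ^ n)) ℂ :=
  fun r c =>
    if (c : ℕ) = (r : ℕ) + 2 ^ n / 2 then 1
    else if (r : ℕ) = (c : ℕ) + 2 ^ n / 2 then -1 else 0

/-- The standard finagler `F₀` (for `n` odd):
`F₀ = (1/√2) Σ_{j<N/2} ( |j⟩⟨j| + |N-j-1⟩⟨j| + (-1)^{#j}(|j⟩⟨N/2+j| - |N-j-1⟩⟨N/2+j|) )`. -/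
def F0 (n : ℕ) : Matrix (Fin (2 ^ n)) (Fin (2 ^ n)) ℂ :=
  fun r c =>
    (Real.sqrt 2 : ℂ)⁻¹ *
      (if (r : ℕ) < 2 ^ n / 2 then
        (if (c : ℕ) = (r : ℕ) then 1
         else if (c : ℕ) = (r : ℕ) + 2 ^ n / 2 then (-1 : ℂ) ^ popCnt (r : ℕ) else 0)
      else
        (if (c : ℕ) = 2 ^ n - 1 - (r : ℕ) then 1
         else if (c : ℕ) = (2 ^ n - 1 - (r : ℕ)) + 2 ^ n / 2 then
            -(-1 : ℂ) ^ popCnt (2 ^ n - 1 - (r : ℕ))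
         else 0))

/-- The concurrence capacity `κ(v) = sup { |(vψ)ᵀ S (vψ)| : ‖ψ‖ = 1, ψᵀSψ = 0 }`. -/
def kappa (n : ℕ) (v : Matrix (Fin (2 ^ n)) (Fin (2 ^ n)) ℂ) : ℝ :=
  sSup { r : ℝ | ∃ ψ : Fin (2 ^ n) → ℂ,
    star ψ ⬝ᵥ ψ = 1 ∧ ψ ⬝ᵥ ((Smat n) *ᵥ ψ) = 0 ∧
    r = ‖(v *ᵥ ψ) ⬝ᵥ ((Smat n) *ᵥ (v *ᵥ ψ))‖ }

lemma sqrt2_inv_mul : ((Real.sqrt 2 : ℂ))⁻¹ * ((Real.sqrt 2 : ℂ))⁻¹ = 2⁻¹ := by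
  rw [← mul_inv, ← Complex.ofReal_mul, Real.mul_self_sqrt (by norm_num)]
  norm_num

lemma neg_one_pow_mul_self (k : ℕ) : ((-1:ℂ))^k * (-1)^k = 1 := by
  rw [← pow_add]; exact Even.neg_one_pow ⟨k, rfl⟩

lemma popCnt_two_mul_add (q b : ℕ) (hb : b < 2) : popCnt (2 * q + b) = popCnt q + b := by
  rcases Nat.eq_zero_or_pos (2 * q + b) with h | h
  · have hq : q = 0 := by omega
    have hb0 : b = 0 := by omega
    simp [hq, hb0, popCnt]
  · unfold popCnt
    rw [Nat.digits_def' (by norm_num : (1:ℕ) < 2) h]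
    have h1 : (2 * q + b) % 2 = b := by omega
    have h2 : (2 * q + b) / 2 = q := by omega
    rw [h1, h2, List.sum_cons]
    omega

lemma popCnt_compl : ∀ n : ℕ, ∀ j, j < 2^n → popCnt j + popCnt (2^n - 1 - j) = n := by
  intro n
  induction n with
  | zero => intro j hj; interval_cases j; simp [popCnt]
  | succ n ih =>
    intro j hj
    have hpow : 2^(n+1) = 2 * 2^n := by ring
    have hq : j / 2 < 2^n := by omega
    have h1 : popCnt j = popCnt (j / 2) + j % 2 := by
      conv_lhs => rw [← Nat.div_add_mod j 2]
      exact popCnt_two_mul_add _ _ (by omega)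
    have h2 : 2^(n+1) - 1 - j = 2 * (2^n - 1 - j / 2) + (1 - j % 2) := by omega
    rw [h1, h2, popCnt_two_mul_add _ _ (by omega)]
    have := ih (j / 2) hq
    omega

lemma neg_one_pow_compl {n j : ℕ} (hodd : Odd n) (hj : j < 2^n) :
    ((-1:ℂ)) ^ popCnt (2^n - 1 - j) = -(-1) ^ popCnt j := by
  have h := popCnt_compl n j hj
  have key : ((-1:ℂ))^popCnt (2^n-1-j) * (-1)^popCnt j = -1 := by
    rw [← pow_add, add_comm, h]
    exact Odd.neg_one_pow hodd
  calc ((-1:ℂ))^popCnt (2^n-1-j)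
      = (-1)^popCnt (2^n-1-j) * ((-1)^popCnt j * (-1)^popCnt j) := by
        rw [neg_one_pow_mul_self, mul_one]
    _ = -(-1) ^ popCnt j := by rw [← mul_assoc, key]; ring

def flipIdx (n : ℕ) (j : Fin (2^n)) : Fin (2^n) :=
  ⟨2^n - 1 - (j:ℕ), by have := j.isLt; omega⟩

lemma flipIdx_val (n : ℕ) (j : Fin (2^n)) : ((flipIdx n j : Fin (2^n)) : ℕ) = 2^n - 1 - (j:ℕ) := rfl

set_option maxHeartbeats 2000000 in
lemma F0T_S_F0 (n : ℕ) (hn : 1 ≤ n) (hodd : Odd n) :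
    (F0 n)ᵀ * Smat n * F0 n = SigmaMat n := by
  have h2n : 2^n = 2 * 2^(n-1) := by
    conv_lhs => rw [show n = (n-1)+1 by omega]
    rw [pow_succ]; ring
  have hM1 : 0 < 2^(n-1) := pow_pos (by norm_num) _
  ext c d
  rw [Matrix.mul_apply]
  have hc2 := c.isLt
  have hd2 := d.isLt
  have inner : ∀ j : Fin (2^n), ((F0 n)ᵀ * Smat n) c j
      = (-1:ℂ)^popCnt (j:ℕ) * F0 n (flipIdx n j) c := by
    intro j
    have hj2 := j.isLt
    rw [Matrix.mul_apply]
    rw [Finset.sum_eq_single (flipIdx n j) ?van (fun h => absurd (Finset.mem_univ _) h)]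
    · simp only [Matrix.transpose_apply, Smat]
      rw [if_pos (by rw [flipIdx_val]; omega)]
      ring
    case van =>
      intro k _ hk
      simp only [Matrix.transpose_apply, Smat]
      rw [if_neg, mul_zero]
      intro h
      apply hk
      apply Fin.ext
      rw [flipIdx_val]
      omega
  rw [Finset.sum_congr rfl (fun j _ => by rw [inner j])]
  by_cases hd : (d:ℕ) < 2^n/2
  · have hne : d ≠ flipIdx n d := by
      intro h; apply_fun Fin.val at h; rw [flipIdx_val] at h; omega
    rw [Finset.sum_eq_add d (flipIdx n d) hne ?van2
      (fun h => absurd (Finset.mem_univ _) h) (fun h => absurd (Finset.mem_univ _) h)]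
    case van2 =>
      intro j _ hj
      have hj2 := j.isLt
      have h1 : (j:ℕ) ≠ (d:ℕ) := fun h => hj.1 (Fin.ext h)
      have h2 : (j:ℕ) ≠ 2^n - 1 - (d:ℕ) := by
        intro h; exact hj.2 (Fin.ext (by rw [flipIdx_val]; omega))
      have hF : F0 n j d = 0 := by
        simp only [F0]
        split_ifs <;> first | omega | ring1
      rw [hF, mul_zero]
    · simp only [F0, SigmaMat, flipIdx_val, Fin.val_mk]
      simp only [(by omega : 2^n - 1 - (2^n - 1 - (d:ℕ)) = (d:ℕ))]
      rw [neg_one_pow_compl hodd (show (d:ℕ) < 2^n from hd2)]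
      split_ifs <;> first
        | omega
        | ring1
        | linear_combination (-2 * ((-1:ℂ))^popCnt (d:ℕ) * ((-1:ℂ))^popCnt (d:ℕ)) * sqrt2_inv_mul - neg_one_pow_mul_self (popCnt (d:ℕ))
        | linear_combination (2 * ((-1:ℂ))^popCnt (d:ℕ) * ((-1:ℂ))^popCnt (d:ℕ)) * sqrt2_inv_mul + neg_one_pow_mul_self (popCnt (d:ℕ))
  · have hdM : (d:ℕ) - 2^n/2 < 2^n := by omega
    have hne : (⟨(d:ℕ) - 2^n/2, hdM⟩ : Fin (2^n)) ≠ flipIdx n ⟨(d:ℕ) - 2^n/2, hdM⟩ := by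
      intro h; apply_fun Fin.val at h; rw [flipIdx_val] at h; simp at h; omega
    rw [Finset.sum_eq_add ⟨(d:ℕ) - 2^n/2, hdM⟩ (flipIdx n ⟨(d:ℕ) - 2^n/2, hdM⟩) hne ?van3
      (fun h => absurd (Finset.mem_univ _) h) (fun h => absurd (Finset.mem_univ _) h)]
    case van3 =>
      intro j _ hj
      have hj2 := j.isLt
      have h1 : (j:ℕ) ≠ (d:ℕ) - 2^n/2 := fun h => hj.1 (Fin.ext h)
      have h2 : (j:ℕ) ≠ 2^n - 1 - ((d:ℕ) - 2^n/2) := by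
        intro h; exact hj.2 (Fin.ext (by rw [flipIdx_val]; simp; omega))
      have hF : F0 n j d = 0 := by
        simp only [F0]
        split_ifs <;> first | omega | ring1
      rw [hF, mul_zero]
    · simp only [F0, SigmaMat, flipIdx_val, Fin.val_mk]
      simp only [(by omega : 2^n - 1 - (2^n - 1 - ((d:ℕ) - 2^n/2)) = (d:ℕ) - 2^n/2)]
      rw [neg_one_pow_compl hodd (show (d:ℕ) - 2^n/2 < 2^n from hdM)]
      split_ifs <;> first
        | omega
        | ring1
        | linear_combination (-2 * ((-1:ℂ))^popCnt ((d:ℕ) - 2^n/2) * ((-1:ℂ))^popCnt ((d:ℕ) - 2^n/2)) * sqrt2_inv_mul - neg_one_pow_mul_self (popCnt ((d:ℕ) - 2^n/2))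
        | linear_combination (2 * ((-1:ℂ))^popCnt ((d:ℕ) - 2^n/2) * ((-1:ℂ))^popCnt ((d:ℕ) - 2^n/2)) * sqrt2_inv_mul + neg_one_pow_mul_self (popCnt ((d:ℕ) - 2^n/2))


set_option maxHeartbeats 1000000 in
lemma F0_mul_F0T (n : ℕ) (hn : 1 ≤ n) : F0 n * (F0 n)ᵀ = 1 := by
  have h2n : 2^n = 2 * 2^(n-1) := by
    conv_lhs => rw [show n = (n-1)+1 by omega]
    rw [pow_succ]; ring
  ext r s
  rw [Matrix.mul_apply]
  simp only [Matrix.transpose_apply]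
  have hr2 := r.isLt
  have hs2 := s.isLt
  by_cases hr : (r:ℕ) < 2^n/2
  · have hrM : (r:ℕ) + 2^n/2 < 2^n := by omega
    have hne : r ≠ ⟨(r:ℕ) + 2^n/2, hrM⟩ := by
      intro h; apply_fun Fin.val at h; simp at h; omega
    rw [Finset.sum_eq_add r ⟨(r:ℕ) + 2^n/2, hrM⟩ hne ?van
      (fun h => absurd (Finset.mem_univ _) h) (fun h => absurd (Finset.mem_univ _) h)]
    case van =>
      intro c _ hc
      have h1 : (c:ℕ) ≠ (r:ℕ) := fun h => hc.1 (Fin.ext h)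
      have h1b : (c:ℕ) ≠ (r:ℕ) + 2^n/2 := fun h => hc.2 (Fin.ext h)
      simp only [F0, if_pos hr, if_neg h1, if_neg h1b, mul_zero, zero_mul]
    · simp only [F0, one_apply, Fin.ext_iff]
      split_ifs <;> first
        | omega
        | (try rw [(by omega : (r:ℕ) = (s:ℕ))]
           try rw [(by omega : (r:ℕ) = 2^n - 1 - (s:ℕ))]
           try rw [(by omega : 2^n - 1 - (2^n - 1 - (s:ℕ)) = (s:ℕ))]
           first
             | ring1
             | linear_combination (1 + ((-1:ℂ))^popCnt (s:ℕ) * ((-1:ℂ))^popCnt (s:ℕ)) * sqrt2_inv_mul + (2:ℂ)⁻¹ * neg_one_pow_mul_self (popCnt (s:ℕ))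
             | linear_combination (1 - ((-1:ℂ))^popCnt (2^n-1-(s:ℕ)) * ((-1:ℂ))^popCnt (2^n-1-(s:ℕ))) * sqrt2_inv_mul - (2:ℂ)⁻¹ * neg_one_pow_mul_self (popCnt (2^n-1-(s:ℕ)))
             | linear_combination (1 + ((-1:ℂ))^popCnt (2^n-1-(s:ℕ)) * ((-1:ℂ))^popCnt (2^n-1-(s:ℕ))) * sqrt2_inv_mul + (2:ℂ)⁻¹ * neg_one_pow_mul_self (popCnt (2^n-1-(s:ℕ)))
             | linear_combination (1 - ((-1:ℂ))^popCnt (s:ℕ) * ((-1:ℂ))^popCnt (s:ℕ)) * sqrt2_inv_mul - (2:ℂ)⁻¹ * neg_one_pow_mul_self (popCnt (s:ℕ)))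
  · have hb1 : 2^n - 1 - (r:ℕ) < 2^n := by omega
    have hb2 : (2^n - 1 - (r:ℕ)) + 2^n/2 < 2^n := by omega
    have hne : (⟨2^n - 1 - (r:ℕ), hb1⟩ : Fin (2^n)) ≠ ⟨(2^n - 1 - (r:ℕ)) + 2^n/2, hb2⟩ := by
      intro h; apply_fun Fin.val at h; simp at h; omega
    rw [Finset.sum_eq_add ⟨2^n - 1 - (r:ℕ), hb1⟩ ⟨(2^n - 1 - (r:ℕ)) + 2^n/2, hb2⟩ hne ?van2
      (fun h => absurd (Finset.mem_univ _) h) (fun h => absurd (Finset.mem_univ _) h)]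
    case van2 =>
      intro c _ hc
      have h1 : (c:ℕ) ≠ 2^n - 1 - (r:ℕ) := fun h => hc.1 (Fin.ext h)
      have h1b : (c:ℕ) ≠ (2^n - 1 - (r:ℕ)) + 2^n/2 := fun h => hc.2 (Fin.ext h)
      simp only [F0, if_neg hr, if_neg h1, if_neg h1b, mul_zero, zero_mul]
    · simp only [F0, one_apply, Fin.ext_iff]
      split_ifs <;> first
        | omega
        | (try rw [(by omega : (r:ℕ) = (s:ℕ))]
           try rw [(by omega : (r:ℕ) = 2^n - 1 - (s:ℕ))]
           try rw [(by omega : 2^n - 1 - (2^n - 1 - (s:ℕ)) = (s:ℕ))]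
           first
             | ring1
             | linear_combination (1 + ((-1:ℂ))^popCnt (s:ℕ) * ((-1:ℂ))^popCnt (s:ℕ)) * sqrt2_inv_mul + (2:ℂ)⁻¹ * neg_one_pow_mul_self (popCnt (s:ℕ))
             | linear_combination (1 - ((-1:ℂ))^popCnt (2^n-1-(s:ℕ)) * ((-1:ℂ))^popCnt (2^n-1-(s:ℕ))) * sqrt2_inv_mul - (2:ℂ)⁻¹ * neg_one_pow_mul_self (popCnt (2^n-1-(s:ℕ)))
             | linear_combination (1 + ((-1:ℂ))^popCnt (2^n-1-(s:ℕ)) * ((-1:ℂ))^popCnt (2^n-1-(s:ℕ))) * sqrt2_inv_mul + (2:ℂ)⁻¹ * neg_one_pow_mul_self (popCnt (2^n-1-(s:ℕ)))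
             | linear_combination (1 - ((-1:ℂ))^popCnt (s:ℕ) * ((-1:ℂ))^popCnt (s:ℕ)) * sqrt2_inv_mul - (2:ℂ)⁻¹ * neg_one_pow_mul_self (popCnt (s:ℕ)))



/-- **`K ≅ Sp(N/2)` for an odd number of qubits.** For `n` odd and `v ∈ SU(2^n)`:
`vᵀ S v = S` iff `w = F₀ᵀ v F₀` satisfies `wᵀ Σ w = Σ`; conjugation by the standard
finagler identifies the symmetry group of the concurrence form with `Sp(N/2)`. -/
theorem K_is_Sp (n : ℕ) (hn : 1 ≤ n) (hodd : Odd n)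
    (v : Matrix (Fin (2 ^ n)) (Fin (2 ^ n)) ℂ)
    (hv : v ∈ Matrix.unitaryGroup (Fin (2 ^ n)) ℂ) (hvdet : v.det = 1) :
    (vᵀ * Smat n * v = Smat n) ↔
      ((F0 n)ᵀ * v * F0 n)ᵀ * SigmaMat n * ((F0 n)ᵀ * v * F0 n) = SigmaMat n := by
  have hA : F0 n * (F0 n)ᵀ = 1 := F0_mul_F0T n hn
  have hA' : (F0 n)ᵀ * F0 n = 1 := mul_eq_one_comm.mp hA
  have hB : (F0 n)ᵀ * Smat n * F0 n = SigmaMat n := F0T_S_F0 n hn hodd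
  have cancel : ∀ X : Matrix (Fin (2^n)) (Fin (2^n)) ℂ, F0 n * ((F0 n)ᵀ * X) = X := by
    intro X; rw [← Matrix.mul_assoc, hA, Matrix.one_mul]
  have recover : ∀ X : Matrix (Fin (2^n)) (Fin (2^n)) ℂ,
      F0 n * ((F0 n)ᵀ * X * F0 n) * (F0 n)ᵀ = X := by
    intro X
    rw [Matrix.mul_assoc ((F0 n)ᵀ) X (F0 n), cancel, Matrix.mul_assoc, hA, Matrix.mul_one]
  have key : ((F0 n)ᵀ * v * F0 n)ᵀ * SigmaMat n * ((F0 n)ᵀ * v * F0 n)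
      = (F0 n)ᵀ * (vᵀ * Smat n * v) * F0 n := by
    rw [← hB]
    simp only [Matrix.transpose_mul, Matrix.transpose_transpose, Matrix.mul_assoc]
    rw [cancel, cancel]
  constructor
  · intro h
    rw [key, h, hB]
  · intro h
    rw [key, ← hB] at h
    calc vᵀ * Smat n * v = F0 n * ((F0 n)ᵀ * (vᵀ * Smat n * v) * F0 n) * (F0 n)ᵀ :=
          (recover _).symm
      _ = F0 n * ((F0 n)ᵀ * Smat n * F0 n) * (F0 n)ᵀ := by rw [h]
      _ = Smat n := recover _
end
end

section
/- Let n be even, let k₁, k₂ ∈ SU(N) satisfy k₁ᵀ S k₁ = S and k₂ᵀ S k₂ = S, let d be a diagonal unitary N×N matrix with diagonal entries d₀, …, d_{N−1}, let a = E₀ d E₀†, and let v = k₁ a k₂. Then the matrix (E₀† v E₀)(E₀† v E₀)ᵀ is conjugate to d² by a real special orthogonal matrix; in particular its multiset of eigenvalues (the concurrence spectrum of v) is {d_j² : 0 ≤ j ≤ N−1}. -/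
open Matrix Complex

noncomputable section

/-! ### Auxiliary lemmas -/

lemma popCnt_eq (m : ℕ) : popCnt m = m % 2 + popCnt (m / 2) := by
  rcases m with _ | m
  · simp [popCnt]
  · rw [popCnt, popCnt, Nat.digits_def' (by norm_num : 1 < 2) (Nat.succ_pos m)]
    simp [Nat.add_comm]

lemma pop_compl (n j : ℕ) (h : j < 2 ^ n) :
    popCnt j + popCnt (2 ^ n - 1 - j) = n := by
  induction n generalizing j with
  | zero =>
    interval_cases j
    simp [popCnt]
  | succ n ih =>
    have h2 : (2:ℕ) ^ (n+1) = 2 * 2 ^ n := by rw [pow_succ]; ring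
    have hj2 : j / 2 < 2 ^ n := by omega
    have key := ih (j/2) hj2
    have e1 : (2 ^ (n+1) - 1 - j) / 2 = 2 ^ n - 1 - j/2 := by omega
    rw [popCnt_eq j, popCnt_eq (2 ^ (n+1) - 1 - j), e1]
    omega

lemma sign_mul_compl {n : ℕ} (hev : Even n) {j : ℕ} (h : j < 2 ^ n) :
    (-1 : ℂ) ^ popCnt j * (-1 : ℂ) ^ popCnt (2 ^ n - 1 - j) = 1 := by
  rw [← pow_add, pop_compl n j h]
  exact hev.neg_one_pow

lemma sign_sq (p : ℕ) : (-1 : ℂ) ^ p * (-1 : ℂ) ^ p = 1 := by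
  rw [← pow_add]; exact (Even.add_self _).neg_one_pow

lemma sign_sq' (p : ℕ) (x : ℂ) : (-1 : ℂ) ^ p * ((-1 : ℂ) ^ p * x) = x := by
  rw [← mul_assoc, sign_sq, one_mul]

lemma sign_compl {n : ℕ} (hev : Even n) {j : ℕ} (h : j < 2 ^ n) :
    (-1 : ℂ) ^ popCnt (2 ^ n - 1 - j) = (-1 : ℂ) ^ popCnt j := by
  have h1 := sign_mul_compl hev h
  have h2 : (-1 : ℂ) ^ popCnt j * (-1 : ℂ) ^ popCnt j = 1 := sign_sq _
  have : (-1 : ℂ) ^ popCnt (2 ^ n - 1 - j)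
      = (-1 : ℂ) ^ popCnt j * ((-1 : ℂ) ^ popCnt j * (-1 : ℂ) ^ popCnt (2 ^ n - 1 - j)) := by
    rw [← mul_assoc, h2, one_mul]
  rw [this, h1, mul_one]

lemma Smat_symm {n : ℕ} (hev : Even n) : (Smat n)ᵀ = Smat n := by
  ext r c
  simp only [Smat, transpose_apply]
  by_cases h : (c : ℕ) + (r : ℕ) = 2 ^ n - 1
  · have h' : (r : ℕ) + (c : ℕ) = 2 ^ n - 1 := by omega
    rw [if_pos h, if_pos h']
    have hc : (c : ℕ) = 2 ^ n - 1 - (r : ℕ) := by omega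
    rw [hc]
    exact (sign_compl hev r.isLt).symm
  · rw [if_neg h, if_neg (by omega)]

lemma Smat_conjTranspose {n : ℕ} (hev : Even n) : (Smat n)ᴴ = Smat n := by
  have : (Smat n)ᴴ = (Smat n)ᵀ := by
    ext i j
    simp only [conjTranspose_apply, transpose_apply, Smat]
    split_ifs <;> simp [star_pow]
  rw [this, Smat_symm hev]

lemma Smat_mul_self {n : ℕ} (hev : Even n) : Smat n * Smat n = 1 := by
  ext i j
  have hiN : (2 ^ n : ℕ) - 1 - (i : ℕ) < 2 ^ n := by
    have := i.isLt; omega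
  rw [Matrix.mul_apply]
  rw [Finset.sum_eq_single (⟨2 ^ n - 1 - (i : ℕ), hiN⟩ : Fin (2 ^ n))]
  · simp only [Smat]
    have h1 : (i : ℕ) + (2 ^ n - 1 - (i : ℕ)) = 2 ^ n - 1 := by have := i.isLt; omega
    rw [if_pos h1]
    by_cases hj : (2 ^ n - 1 - (i : ℕ)) + (j : ℕ) = 2 ^ n - 1
    · have hij : j = i := by
        have := i.isLt; have := j.isLt
        exact Fin.ext (by omega)
      rw [if_pos hj, hij, Matrix.one_apply_eq, mul_comm]
      exact sign_mul_compl hev i.isLt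
    · have hij : j ≠ i := by
        intro h; subst h
        have := j.isLt; omega
      rw [if_neg hj, Matrix.one_apply_ne' (by simpa using hij), mul_zero]
  · intro b _ hb
    simp only [Smat]
    rw [if_neg, zero_mul]
    intro hcontra
    apply hb
    apply Fin.ext
    show (b : ℕ) = 2 ^ n - 1 - (i : ℕ)
    have := i.isLt; omega
  · intro h
    exact absurd (Finset.mem_univ _) h

lemma Smat_mul_E0 {n : ℕ} (hn : 1 ≤ n) (hev : Even n) :
    Smat n * E0 n = ((E0 n)ᴴ)ᵀ := by
  have hN : (2:ℕ) ^ n = 2 * 2 ^ (n-1) := by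
    conv_lhs => rw [show n = (n-1)+1 by omega]
    rw [pow_succ]; ring
  have hP2 : (2:ℕ) ^ n / 2 = 2 ^ (n-1) := by omega
  ext r c
  have hrN := r.isLt
  have hcN := c.isLt
  have hiN : (2 ^ n : ℕ) - 1 - (r : ℕ) < 2 ^ n := by omega
  rw [Matrix.mul_apply, transpose_apply, conjTranspose_apply]
  rw [Finset.sum_eq_single (⟨2 ^ n - 1 - (r : ℕ), hiN⟩ : Fin (2 ^ n))]
  · have h1 : (r : ℕ) + (2 ^ n - 1 - (r : ℕ)) = 2 ^ n - 1 := by omega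
    simp only [Smat, Fin.val_mk, if_pos h1]
    have hcompl : 2 ^ n - 1 - (2 ^ n - 1 - (r : ℕ)) = (r : ℕ) := by omega
    by_cases hr : (r : ℕ) < 2 ^ n / 2
    · have hr' : ¬ (2 ^ n - 1 - (r : ℕ) < 2 ^ n / 2) := by omega
      simp only [E0, Fin.val_mk, if_neg hr', if_pos hr, hcompl, star_mul',
        RCLike.star_def, map_inv₀, Complex.conj_ofReal]
      rw [sign_compl hev hrN]
      split_ifs <;>
        simp [mul_comm, mul_assoc, mul_left_comm, sign_sq, sign_sq', Complex.conj_I]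
    · have hr' : (2 ^ n - 1 - (r : ℕ)) < 2 ^ n / 2 := by omega
      simp only [E0, Fin.val_mk, if_pos hr', if_neg hr, star_mul',
        RCLike.star_def, map_inv₀, Complex.conj_ofReal]
      rw [sign_compl hev hrN]
      split_ifs <;>
        simp [mul_comm, mul_assoc, mul_left_comm, sign_sq, sign_sq', Complex.conj_I]
  · intro b _ hb
    simp only [Smat]
    rw [if_neg, zero_mul]
    intro hcontra
    apply hb
    apply Fin.ext
    show (b : ℕ) = 2 ^ n - 1 - (r : ℕ)
    have := b.isLt; omega
  · intro h; exact absurd (Finset.mem_univ _) h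

lemma E0_row {n : ℕ} (hn : 1 ≤ n) (r : Fin (2 ^ n)) :
    ∃ j : ℕ, j < 2 ^ (n-1) ∧ ∃ α β : ℂ,
      (∀ c : Fin (2 ^ n), E0 n r c =
        (Real.sqrt 2 : ℂ)⁻¹ *
          (if (c : ℕ) = 2 * j then α else if (c : ℕ) = 2 * j + 1 then β else 0)) ∧
      (((r : ℕ) = j ∧ (r : ℕ) < 2 ^ (n-1) ∧ α = 1 ∧ β = Complex.I) ∨
       ((r : ℕ) = 2 ^ n - 1 - j ∧ 2 ^ (n-1) ≤ (r : ℕ) ∧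
        α = (-1 : ℂ) ^ popCnt j ∧ β = -Complex.I * (-1 : ℂ) ^ popCnt j)) := by
  have hN : (2:ℕ) ^ n = 2 * 2 ^ (n-1) := by
    conv_lhs => rw [show n = (n-1)+1 by omega]
    rw [pow_succ]; ring
  have hrN := r.isLt
  by_cases hr : (r : ℕ) < 2 ^ n / 2
  · exact ⟨r, by omega, 1, Complex.I,
      fun c => by simp only [E0, if_pos hr], Or.inl ⟨rfl, by omega, rfl, rfl⟩⟩
  · exact ⟨2 ^ n - 1 - (r : ℕ), by omega, _, _,
      fun c => by simp only [E0, if_neg hr], Or.inr ⟨by omega, by omega, rfl, rfl⟩⟩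

lemma sum_two {N : ℕ} (f : Fin N → ℂ) (c0 c1 : Fin N) (hne : c0 ≠ c1)
    (h0 : ∀ c, c ≠ c0 → c ≠ c1 → f c = 0) :
    ∑ c, f c = f c0 + f c1 := by
  rw [← Finset.sum_pair hne]
  refine (Finset.sum_subset (Finset.subset_univ _) ?_).symm
  intro c _ hc
  simp only [Finset.mem_insert, Finset.mem_singleton, not_or] at hc
  exact h0 c hc.1 hc.2

lemma final_alg {m : Type*} [Fintype m] [DecidableEq m]
    (O₁ O₂ D : Matrix m m ℂ) (hD : Dᵀ = D) (hO₂ : O₂ * O₂ᵀ = 1) :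
    (O₁ * D * O₂) * (O₁ * D * O₂)ᵀ = O₁ * (D * D) * O₁ᵀ := by
  rw [transpose_mul, transpose_mul, hD]
  have h1 : O₁ * D * O₂ * (O₂ᵀ * (D * O₁ᵀ)) = O₁ * D * ((O₂ * O₂ᵀ) * (D * O₁ᵀ)) := by
    simp only [Matrix.mul_assoc]
  rw [h1, hO₂, Matrix.one_mul]
  simp only [Matrix.mul_assoc]

lemma E0_mul_conjTranspose {n : ℕ} (hn : 1 ≤ n) : E0 n * (E0 n)ᴴ = 1 := by
  have hN : (2:ℕ) ^ n = 2 * 2 ^ (n-1) := by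
    conv_lhs => rw [show n = (n-1)+1 by omega]
    rw [pow_succ]; ring
  have hs2 : ((Real.sqrt 2 : ℂ))⁻¹ * ((Real.sqrt 2 : ℂ))⁻¹ = 2⁻¹ := by
    have h22 : (Real.sqrt 2 : ℂ) * (Real.sqrt 2 : ℂ) = 2 := by
      norm_cast
      rw [Real.mul_self_sqrt (by norm_num)]
    rw [← mul_inv, h22]
  have hstars : star ((Real.sqrt 2 : ℂ))⁻¹ = ((Real.sqrt 2 : ℂ))⁻¹ := by
    simp [RCLike.star_def, map_inv₀, Complex.conj_ofReal]
  ext r r'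
  obtain ⟨j, hj, α, β, hrow, hc⟩ := E0_row hn r
  obtain ⟨j', hj', α', β', hrow', hc'⟩ := E0_row hn r'
  rw [Matrix.mul_apply]
  simp only [conjTranspose_apply, hrow, hrow']
  have hb0 : 2 * j < 2 ^ n := by omega
  have hb1 : 2 * j + 1 < 2 ^ n := by omega
  rw [sum_two _ (⟨2 * j, hb0⟩ : Fin (2 ^ n)) ⟨2 * j + 1, hb1⟩
      (by simp [Fin.ext_iff])
      (fun c h0 h1 => by
        rw [Fin.ne_iff_vne] at h0 h1
        simp only [Fin.val_mk] at h0 h1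
        rw [if_neg h0, if_neg h1, mul_zero, zero_mul])]
  have hne1 : ¬ (2 * j + 1 = 2 * j) := by omega
  simp only [Fin.val_mk, eq_self_iff_true, if_true, if_neg hne1]
  by_cases hjj : j = j'
  · subst hjj
    simp only [eq_self_iff_true, if_true, if_neg hne1]
    rcases hc with ⟨h1, h2, ha, hb⟩ | ⟨h1, h2, ha, hb⟩ <;>
      rcases hc' with ⟨h1', h2', ha', hb'⟩ | ⟨h1', h2', ha', hb'⟩
    · have : r = r' := Fin.ext (by omega)
      subst this
      rw [Matrix.one_apply_eq, ha, hb, ha', hb']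
      simp only [star_mul', hstars, RCLike.star_def, Complex.conj_I, star_one,
        _root_.map_one, mul_one, one_mul]
      linear_combination (1 - Complex.I ^ 2) * hs2 - (1/2 : ℂ) * Complex.I_sq
    · have hrr : r ≠ r' := by rw [Fin.ne_iff_vne]; omega
      rw [Matrix.one_apply_ne hrr, ha, hb, ha', hb']
      simp only [star_mul', hstars, RCLike.star_def, Complex.conj_I, star_one,
        _root_.map_one, star_neg, star_pow, mul_one, one_mul]
      linear_combination ((Real.sqrt 2 : ℂ))⁻¹ ^ 2 * (-1 : ℂ) ^ popCnt j * Complex.I_sq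
    · have hrr : r ≠ r' := by rw [Fin.ne_iff_vne]; omega
      rw [Matrix.one_apply_ne hrr, ha, hb, ha', hb']
      simp only [star_mul', hstars, RCLike.star_def, Complex.conj_I, star_one,
        _root_.map_one, star_neg, star_pow, mul_one, one_mul]
      linear_combination ((Real.sqrt 2 : ℂ))⁻¹ ^ 2 * (-1 : ℂ) ^ popCnt j * Complex.I_sq
    · have : r = r' := Fin.ext (by omega)
      subst this
      rw [Matrix.one_apply_eq, ha, hb, ha', hb']
      simp only [star_mul', hstars, RCLike.star_def, Complex.conj_I, star_one,
        _root_.map_one, star_neg, star_pow, mul_one, one_mul]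
      have hg := sign_sq (popCnt j)
      linear_combination ((-1 : ℂ) ^ popCnt j) ^ 2 * (1 - Complex.I ^ 2) * hs2 +
        (1 - Complex.I ^ 2) / 2 * hg - (1/2 : ℂ) * Complex.I_sq
  · rw [if_neg (by omega : ¬ 2 * j = 2 * j'), if_neg (by omega : ¬ 2 * j = 2 * j' + 1),
        if_neg (by omega : ¬ 2 * j + 1 = 2 * j'), if_neg (by omega : ¬ 2 * j + 1 = 2 * j' + 1)]
    have hrr : r ≠ r' := by
      rw [Fin.ne_iff_vne]
      rcases hc with ⟨h1, h2, _⟩ | ⟨h1, h2, _⟩ <;>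
        rcases hc' with ⟨h1', h2', _⟩ | ⟨h1', h2', _⟩ <;> omega
    rw [Matrix.one_apply_ne hrr]
    simp

/-- **Concurrence spectrum of `v = k₁ a k₂`** (for `n` even): with `a = E₀ d E₀†` and
`k₁, k₂ ∈ SU(N)` preserving the concurrence form, the matrix `(E₀† v E₀)(E₀† v E₀)ᵀ`
is conjugate to `d²` by a real special orthogonal matrix; in particular its multiset of
eigenvalues, the concurrence spectrum of `v`, is `{dⱼ²}`. -/
theorem concurrence_spectrum (n : ℕ) (hn : 1 ≤ n) (hev : Even n)
    (k₁ k₂ : Matrix (Fin (2 ^ n)) (Fin (2 ^ n)) ℂ)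
    (hk₁ : k₁ ∈ Matrix.unitaryGroup (Fin (2 ^ n)) ℂ) (hk₁det : k₁.det = 1)
    (hk₂ : k₂ ∈ Matrix.unitaryGroup (Fin (2 ^ n)) ℂ) (hk₂det : k₂.det = 1)
    (hk₁S : k₁ᵀ * Smat n * k₁ = Smat n)
    (hk₂S : k₂ᵀ * Smat n * k₂ = Smat n)
    (d : Fin (2 ^ n) → ℂ) (hd : ∀ j, ‖d j‖ = 1) :
    ∃ O : Matrix (Fin (2 ^ n)) (Fin (2 ^ n)) ℂ,
      (∀ i j, (O i j).im = 0) ∧ Oᵀ * O = 1 ∧ O.det = 1 ∧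
      (let v := k₁ * (E0 n * Matrix.diagonal d * (E0 n)ᴴ) * k₂;
        ((E0 n)ᴴ * v * E0 n) * ((E0 n)ᴴ * v * E0 n)ᵀ =
          O * Matrix.diagonal (fun j => (d j) ^ 2) * Oᵀ) := by
  have hEEH : E0 n * (E0 n)ᴴ = 1 := E0_mul_conjTranspose hn
  have hEHE : (E0 n)ᴴ * E0 n = 1 := mul_eq_one_comm.mp hEEH
  have hSE : Smat n * E0 n = ((E0 n)ᴴ)ᵀ := Smat_mul_E0 hn hev
  have hSsym := Smat_symm (n := n) hev
  have hSH := Smat_conjTranspose (n := n) hev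
  have hSS := Smat_mul_self (n := n) hev
  have hTH : ∀ A : Matrix (Fin (2 ^ n)) (Fin (2 ^ n)) ℂ, (Aᵀ)ᴴ = (Aᴴ)ᵀ := by
    intro A; ext i j; simp [conjTranspose_apply, transpose_apply]
  have hEH : (E0 n)ᴴ = (E0 n)ᵀ * Smat n := by
    rw [← transpose_transpose ((E0 n)ᴴ), ← hSE, transpose_mul, hSsym]
  have hETSE : (E0 n)ᵀ * Smat n * E0 n = 1 := by
    rw [← hEH]; exact hEHE
  have hEHTEH : ((E0 n)ᴴ)ᵀ * (E0 n)ᴴ = Smat n := by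
    rw [← hSE, Matrix.mul_assoc, hEEH, Matrix.mul_one]
  -- the conjugate of a symplectic unitary
  have hconj : ∀ k : Matrix (Fin (2 ^ n)) (Fin (2 ^ n)) ℂ,
      k ∈ Matrix.unitaryGroup (Fin (2 ^ n)) ℂ → kᵀ * Smat n * k = Smat n →
      (kᵀ)ᴴ = Smat n * k * Smat n := by
    intro k hk hkS
    have hU : k * kᴴ = 1 := Matrix.mem_unitaryGroup_iff.mp hk
    have h := congrArg conjTranspose hkS
    rw [conjTranspose_mul, conjTranspose_mul, hSH] at h
    -- h : kᴴ * (Smat n * (kᵀ)ᴴ) = Smat n  (up to association)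
    have h2 := congrArg (fun M => k * M) h
    simp only [← Matrix.mul_assoc] at h2
    rw [hU, Matrix.one_mul] at h2
    -- h2 : Smat n * (kᵀ)ᴴ = k * Smat n
    have h3 := congrArg (fun M => Smat n * M) h2
    simp only [← Matrix.mul_assoc] at h3
    rw [hSS, Matrix.one_mul] at h3
    exact h3
  -- orthogonality of O = E₀ᴴ k E₀
  have horth : ∀ k : Matrix (Fin (2 ^ n)) (Fin (2 ^ n)) ℂ,
      kᵀ * Smat n * k = Smat n →
      ((E0 n)ᴴ * k * E0 n)ᵀ * ((E0 n)ᴴ * k * E0 n) = 1 := by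
    intro k hkS
    rw [transpose_mul, transpose_mul]
    calc (E0 n)ᵀ * (kᵀ * ((E0 n)ᴴ)ᵀ) * ((E0 n)ᴴ * k * E0 n)
        = (E0 n)ᵀ * (kᵀ * (((E0 n)ᴴ)ᵀ * (E0 n)ᴴ) * k) * E0 n := by
          simp only [Matrix.mul_assoc]
      _ = (E0 n)ᵀ * (kᵀ * Smat n * k) * E0 n := by rw [hEHTEH]
      _ = (E0 n)ᵀ * Smat n * E0 n := by rw [hkS, Matrix.mul_assoc]
      _ = 1 := hETSE
  refine ⟨(E0 n)ᴴ * k₁ * E0 n, ?_, horth k₁ hk₁S, ?_, ?_⟩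
  · -- real entries
    have hreal : (((E0 n)ᴴ * k₁ * E0 n)ᵀ)ᴴ = (E0 n)ᴴ * k₁ * E0 n := by
      calc (((E0 n)ᴴ * k₁ * E0 n)ᵀ)ᴴ
          = (((E0 n)ᴴ * k₁ * E0 n)ᴴ)ᵀ := hTH _
        _ = ((E0 n)ᴴ * (k₁ᴴ * ((E0 n)ᴴ)ᴴ))ᵀ := by
            rw [conjTranspose_mul, conjTranspose_mul]
        _ = ((E0 n)ᴴ * (k₁ᴴ * E0 n))ᵀ := by rw [conjTranspose_conjTranspose]
        _ = (k₁ᴴ * E0 n)ᵀ * ((E0 n)ᴴ)ᵀ := by rw [transpose_mul]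
        _ = (E0 n)ᵀ * (k₁ᴴ)ᵀ * ((E0 n)ᴴ)ᵀ := by rw [transpose_mul]
        _ = (E0 n)ᵀ * (k₁ᵀ)ᴴ * ((E0 n)ᴴ)ᵀ := by rw [← hTH k₁]
        _ = (E0 n)ᵀ * (Smat n * k₁ * Smat n) * (Smat n * E0 n) := by
            rw [hconj k₁ hk₁ hk₁S, ← hSE]
        _ = (E0 n)ᵀ * Smat n * (k₁ * ((Smat n * Smat n) * E0 n)) := by
            simp only [Matrix.mul_assoc]
        _ = (E0 n)ᵀ * Smat n * (k₁ * E0 n) := by rw [hSS, Matrix.one_mul]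
        _ = (E0 n)ᴴ * k₁ * E0 n := by rw [← hEH, Matrix.mul_assoc]
    intro i j
    have h := congrFun (congrFun hreal i) j
    simp only [conjTranspose_apply, transpose_apply] at h
    have : (starRingEnd ℂ) (((E0 n)ᴴ * k₁ * E0 n) i j) = ((E0 n)ᴴ * k₁ * E0 n) i j := h
    exact (Complex.conj_eq_iff_im.mp this)
  · -- determinant
    rw [Matrix.det_mul, Matrix.det_mul, hk₁det, mul_one, ← Matrix.det_mul, hEHE,
      Matrix.det_one]
  · -- main identity
    show ((E0 n)ᴴ * (k₁ * (E0 n * Matrix.diagonal d * (E0 n)ᴴ) * k₂) * E0 n) *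
        ((E0 n)ᴴ * (k₁ * (E0 n * Matrix.diagonal d * (E0 n)ᴴ) * k₂) * E0 n)ᵀ =
      ((E0 n)ᴴ * k₁ * E0 n) * Matrix.diagonal (fun j => (d j) ^ 2) *
        ((E0 n)ᴴ * k₁ * E0 n)ᵀ
    have hO₂ := horth k₂ hk₂S
    have hO₂' : ((E0 n)ᴴ * k₂ * E0 n) * ((E0 n)ᴴ * k₂ * E0 n)ᵀ = 1 :=
      mul_eq_one_comm.mp hO₂
    have hM : (E0 n)ᴴ * (k₁ * (E0 n * Matrix.diagonal d * (E0 n)ᴴ) * k₂) * E0 n =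
        ((E0 n)ᴴ * k₁ * E0 n) * Matrix.diagonal d * ((E0 n)ᴴ * k₂ * E0 n) := by
      simp only [Matrix.mul_assoc]
    have hDD : Matrix.diagonal d * Matrix.diagonal d =
        Matrix.diagonal (fun j => (d j) ^ 2) := by
      rw [Matrix.diagonal_mul_diagonal]
      congr 1
      funext j
      ring
    rw [hM, final_alg _ _ _ (Matrix.diagonal_transpose d) hO₂', hDD]
end
end
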